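/- Let g be a symmetric invertible 4×4 real matrix with inverse g^{-1} (entries g^{αβ}), and let h : Fin 4 → Fin 4 → Fin 4 → ℝ be symmetric in its last two indices (h^α_{βγ} = h^α_{γβ}) and satisfy, for all α, β, γ: Σ_λ (g_{αλ} h^λ_{γβ} + g_{βλ} h^λ_{γα}) - (2/3) g_{αβ} Σ_λ h^λ_{γλ} = 0. Then h = 0. -/
import Mathlib


theorem stmt_3 (g : Matrix (Fin 4) (Fin 4) ℝ) (hg : g.IsSymm) (hdet : IsUnit g.det)
    (h : Fin 4 → Fin 4 → Fin 4 → ℝ)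
    (hsym : ∀ α β γ, h α β γ = h α γ β)
    (heq : ∀ α β γ, (∑ l, (g α l * h l γ β + g β l * h l γ α))
      - (2/3) * g α β * (∑ l, h l γ l) = 0) :
    ∀ α β γ, h α β γ = 0 := by
  have hmul : g⁻¹ * g = 1 := Matrix.nonsing_inv_mul g hdet
  set S : Fin 4 → Fin 4 → Fin 4 → ℝ := fun a c b => ∑ l, g a l * h l c b with hSdef
  have hgi : ∀ a b, g⁻¹ a b = g⁻¹ b a := by
    have htr : Matrix.transpose g⁻¹ = g⁻¹ := by
      rw [Matrix.transpose_nonsing_inv, hg.eq]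
    intro a b
    conv_lhs => rw [← htr]
    rfl
  have hdelta : ∀ l m, (∑ a, g⁻¹ l a * g a m) = if l = m then (1:ℝ) else 0 := by
    intro l m
    have := congrFun (congrFun hmul l) m
    simpa [Matrix.mul_apply, Matrix.one_apply] using this
  have hrec : ∀ l c b, h l c b = ∑ a, g⁻¹ l a * S a c b := by
    intro l c b
    calc h l c b = ∑ m, (if l = m then (1:ℝ) else 0) * h m c b := by
          simp
      _ = ∑ m, (∑ a, g⁻¹ l a * g a m) * h m c b := by
          simp only [hdelta]
      _ = ∑ m, ∑ a, g⁻¹ l a * (g a m * h m c b) := by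
          simp [Finset.sum_mul, mul_assoc]
      _ = ∑ a, ∑ m, g⁻¹ l a * (g a m * h m c b) := Finset.sum_comm
      _ = ∑ a, g⁻¹ l a * S a c b := by
          simp [hSdef, Finset.mul_sum]
  have hSanti : ∀ α β γ, S α γ β + S β γ α = (2/3) * g α β * (∑ l, h l γ l) := by
    intro α β γ
    have := heq α β γ
    simp only [Finset.sum_add_distrib] at this
    simp only [hSdef]
    linarith
  have hSsym : ∀ a c b, S a c b = S a b c := by
    intro a c b
    simp only [hSdef]
    exact Finset.sum_congr rfl fun l _ => by rw [hsym]
  have hT : ∀ γ, (∑ l, h l γ l) = 0 := by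
    intro γ
    have key : ∑ b, ∑ a, g⁻¹ b a * (S a γ b + S b γ a)
        = (2/3) * (∑ l, h l γ l) * ∑ b, ∑ a, g⁻¹ b a * g a b := by
      rw [Finset.mul_sum]
      refine Finset.sum_congr rfl fun b _ => ?_
      rw [Finset.mul_sum]
      refine Finset.sum_congr rfl fun a _ => ?_
      rw [hSanti a b γ]
      ring
    have t1 : ∑ b, ∑ a, g⁻¹ b a * (S a γ b + S b γ a) = 2 * ∑ l, h l γ l := by
      have e1 : ∑ b, ∑ a, g⁻¹ b a * S a γ b = ∑ l, h l γ l :=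
        Finset.sum_congr rfl fun b _ => (hrec b γ b).symm
      have e2 : ∑ b, ∑ a, g⁻¹ b a * S b γ a = ∑ l, h l γ l := by
        have : ∑ b, ∑ a, g⁻¹ b a * S b γ a = ∑ a, ∑ b, g⁻¹ a b * S b γ a := by
          rw [Finset.sum_comm]
          exact Finset.sum_congr rfl fun a _ => Finset.sum_congr rfl fun b _ => by
            rw [hgi]
        rw [this]
        exact Finset.sum_congr rfl fun a _ => (hrec a γ a).symm
      calc ∑ b, ∑ a, g⁻¹ b a * (S a γ b + S b γ a)
          = (∑ b, ∑ a, g⁻¹ b a * S a γ b) + ∑ b, ∑ a, g⁻¹ b a * S b γ a := by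
            simp [mul_add, Finset.sum_add_distrib]
        _ = 2 * ∑ l, h l γ l := by rw [e1, e2]; ring
    have t2 : ∑ b, ∑ a, g⁻¹ b a * g a b = 4 := by
      have : ∀ b : Fin 4, ∑ a, g⁻¹ b a * g a b = 1 := by
        intro b; rw [hdelta]; simp
      simp [this]
    rw [t1, t2] at key
    linarith
  have hS0 : ∀ a c b, S a c b = 0 := by
    have hA : ∀ α β γ, S α γ β + S β γ α = 0 := by
      intro α β γ
      rw [hSanti, hT]
      ring
    intro a c b
    have h1 := hA a b c
    have h2 := hA a c b
    have h3 := hA b c a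
    have s1 := hSsym a c b
    have s2 := hSsym b c a
    have s3 := hSsym c b a
    have s4 := hSsym a b c
    have s5 := hSsym b a c
    have s6 := hSsym c a b
    linarith
  intro α β γ
  rw [hsym, hrec]
  simp [hS0]
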